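/- Let T_∞ be the regular tree in which every vertex has countably infinite degree, and let c be a random colouring of its vertices with finitely many colours (colours chosen i.i.d. uniformly). Then almost surely there exists a non-trivial automorphism of T_∞ preserving c. In fact, any colouring in which every vertex has infinitely many neighbours of each colour admits a non-trivial colour-preserving automorphism. -/

import Mathlib

open MeasureTheory

open SimpleGraph

namespace TreeAux

variable {V : Type*} {G : SimpleGraph V}

attribute [local instance] Classical.decEq

lemma concat_isPath {v u x : V} {p : G.Walk v u} (hp : p.IsPath) (h : G.Adj u x)
    (hx : x ∉ p.support) : (p.concat h).IsPath := by
  rw [← Walk.isPath_reverse_iff, Walk.reverse_concat]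
  exact hp.reverse.cons (by simpa using hx)

lemma path_eq (htree : G.IsTree) {a b : V} {p q : G.Walk a b} (hp : p.IsPath) (hq : q.IsPath) :
    p = q :=
  congrArg Subtype.val (htree.IsAcyclic.path_unique ⟨p, hp⟩ ⟨q, hq⟩)

/-- In a tree, a neighbour of `u` is at distance from `v` exactly one more or one less. -/
lemma adj_dist (htree : G.IsTree) (v : V) {u x : V} (h : G.Adj u x) :
    G.dist v x + 1 = G.dist v u ∨ G.dist v u + 1 = G.dist v x := by
  obtain ⟨p, hp, hl⟩ := htree.isConnected.exists_path_of_dist v u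
  by_cases hx : x ∈ p.support
  · left
    have hdrop : p.dropUntil x hx = Walk.cons h.symm Walk.nil :=
      path_eq htree (hp.dropUntil hx) (Path.singleton h.symm).2
    have hlen : (p.takeUntil x hx).length + 1 = G.dist v u := by
      have := congrArg Walk.length (p.take_spec hx)
      rw [Walk.length_append, hdrop] at this
      simpa [hl] using this
    have h1 : G.dist v x ≤ (p.takeUntil x hx).length := dist_le _
    have h2 : G.dist v u ≤ G.dist v x + 1 := by
      have := htree.isConnected.dist_triangle (u := v) (v := x) (w := u)
      rwa [(dist_eq_one_iff_adj).2 h.symm] at this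
    omega
  · right
    obtain ⟨q, hq, hql⟩ := htree.isConnected.exists_path_of_dist v x
    have : q = p.concat h := path_eq htree hq (concat_isPath hp h hx)
    rw [← hql, this, Walk.length_concat, hl]

lemma exists_parent (htree : G.IsTree) {v u : V} (hne : u ≠ v) :
    ∃ x, G.Adj u x ∧ G.dist v x + 1 = G.dist v u := by
  obtain ⟨p, hp, hl⟩ := htree.isConnected.exists_path_of_dist u v
  cases p with
  | nil => exact absurd rfl hne
  | @cons _ x _ h q =>
    refine ⟨x, h, ?_⟩
    have h1 : G.dist v x ≤ q.length := dist_comm (G := G) (u := v) ▸ dist_le q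
    have h2 : q.length + 1 = G.dist v u := by
      rw [dist_comm]; simpa using hl
    rcases adj_dist htree v h with h3 | h3 <;> omega

lemma parent_unique (htree : G.IsTree) {v u x₁ x₂ : V} (h₁ : G.Adj u x₁) (h₂ : G.Adj u x₂)
    (hd₁ : G.dist v x₁ + 1 = G.dist v u) (hd₂ : G.dist v x₂ + 1 = G.dist v u) : x₁ = x₂ := by
  obtain ⟨p₁, hp₁, hl₁⟩ := htree.isConnected.exists_path_of_dist v x₁
  obtain ⟨p₂, hp₂, hl₂⟩ := htree.isConnected.exists_path_of_dist v x₂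
  have hu₁ : u ∉ p₁.support := by
    intro hu
    have := dist_le (p₁.takeUntil u hu)
    have := Walk.length_takeUntil_le p₁ hu
    omega
  have hu₂ : u ∉ p₂.support := by
    intro hu
    have := dist_le (p₂.takeUntil u hu)
    have := Walk.length_takeUntil_le p₂ hu
    omega
  have heq : p₁.concat h₁.symm = p₂.concat h₂.symm :=
    path_eq htree (concat_isPath hp₁ h₁.symm hu₁) (concat_isPath hp₂ h₂.symm hu₂)
  have := congrArg (fun w => w.reverse.support) heq
  simp only [Walk.reverse_concat, Walk.support_cons] at this
  rw [p₁.reverse.support_eq_cons, p₂.reverse.support_eq_cons] at this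
  simp only [List.cons.injEq] at this
  exact this.2.1

noncomputable def parent (htree : G.IsTree) (v u : V) : V :=
  if h : u = v then v else (exists_parent htree h).choose

lemma parent_spec (htree : G.IsTree) {v u : V} (h : u ≠ v) :
    G.Adj u (parent htree v u) ∧ G.dist v (parent htree v u) + 1 = G.dist v u := by
  rw [parent, dif_neg h]
  exact (exists_parent htree h).choose_spec

lemma eq_parent (htree : G.IsTree) {v u x : V} (h : u ≠ v) (hadj : G.Adj u x)
    (hd : G.dist v x + 1 = G.dist v u) : x = parent htree v u :=
  parent_unique htree hadj (parent_spec htree h).1 hd (parent_spec htree h).2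

def children (G : SimpleGraph V) (v u : V) : Set V :=
  {x | G.Adj u x ∧ G.dist v x = G.dist v u + 1}

lemma children_subset (v u : V) : children G v u ⊆ G.neighborSet u := fun _ h => h.1

lemma ne_root_of_mem_children {v u x : V} (h : x ∈ children G v u) : x ≠ v := by
  rintro rfl
  have := h.2
  rw [SimpleGraph.dist_self] at this
  omega

lemma dist_pos_of_ne (htree : G.IsTree) {v u : V} (h : u ≠ v) : 0 < G.dist v u :=
  htree.isConnected.pos_dist_of_ne (Ne.symm h)

lemma parent_of_mem_children (htree : G.IsTree) {v u x : V} (h : x ∈ children G v u) :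
    parent htree v x = u :=
  (eq_parent htree (ne_root_of_mem_children h) h.1.symm (by have := h.2; omega)).symm

lemma mem_children_parent (htree : G.IsTree) {v u : V} (h : u ≠ v) :
    u ∈ children G v (parent htree v u) := by
  obtain ⟨hadj, hd⟩ := parent_spec htree (v := v) h
  exact ⟨hadj.symm, by omega⟩

/-- Every neighbour other than the parent is a child. -/
lemma mem_children_of_adj (htree : G.IsTree) {v u x : V} (hadj : G.Adj u x)
    (hx : x ≠ parent htree v u) : x ∈ children G v u := by
  rcases adj_dist htree v hadj with h | h
  · exfalso
    have hne : u ≠ v := by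
      rintro rfl
      rw [SimpleGraph.dist_self] at h
      omega
    exact hx (eq_parent htree hne hadj h)
  · exact ⟨hadj, h.symm⟩

lemma children_color {C : Type*} (htree : G.IsTree) (v : V) (c : V → C)
    (hcc : ∀ u k, ({w ∈ G.neighborSet u | c w = k}).Countable)
    (hci : ∀ u k, ({w ∈ G.neighborSet u | c w = k}).Infinite) (u : V) (k : C) :
    ({x ∈ children G v u | c x = k}).Countable ∧ ({x ∈ children G v u | c x = k}).Infinite := by
  constructor
  · have hsub : {x ∈ children G v u | c x = k} ⊆ {w ∈ G.neighborSet u | c w = k} :=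
      fun x hx => ⟨children_subset v u hx.1, hx.2⟩
    exact Set.Countable.mono hsub (hcc u k)
  · apply Set.Infinite.mono (s := {w ∈ G.neighborSet u | c w = k} \ {parent htree v u})
    · rintro x ⟨⟨hx1, hx2⟩, hx3⟩
      exact ⟨mem_children_of_adj htree hx1 (by simpa using hx3), hx2⟩
    · exact ((hci u k).diff (Set.finite_singleton _))

lemma exists_color_equiv {C α β : Type*} (f : α → C) (g : β → C)
    (E : ∀ k, {x : α // f x = k} ≃ {y : β // g y = k}) :
    ∃ e : α ≃ β, ∀ x, g (e x) = f x := by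
  refine ⟨(Equiv.sigmaFiberEquiv f).symm.trans ((Equiv.sigmaCongrRight E).trans
    (Equiv.sigmaFiberEquiv g)), fun x => ?_⟩
  exact (E (f x) ⟨x, rfl⟩).2

def fiberEquiv {C : Type*} (c : V → C) (S : Set V) (k : C) :
    {x : ↥S // c ↑x = k} ≃ ↥{x ∈ S | c x = k} where
  toFun p := ⟨↑p.1, p.1.2, p.2⟩
  invFun q := ⟨⟨↑q, q.2.1⟩, q.2.2⟩
  left_inv p := rfl
  right_inv q := rfl

lemma exists_equiv {C : Type*} (htree : G.IsTree) (v : V) (c : V → C)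
    (hcc : ∀ u k, ({w ∈ G.neighborSet u | c w = k}).Countable)
    (hci : ∀ u k, ({w ∈ G.neighborSet u | c w = k}).Infinite) (a b : V) :
    ∃ e : ↥(children G v a) ≃ ↥(children G v b), ∀ x, c ↑(e x) = c ↑x := by
  apply exists_color_equiv (fun x : ↥(children G v a) => c ↑x) (fun y : ↥(children G v b) => c ↑y)
  intro k
  have ha := children_color htree v c hcc hci a k
  have hb := children_color htree v c hcc hci b k
  have := ha.1.to_subtype; have := ha.2.to_subtype
  have := hb.1.to_subtype; have := hb.2.to_subtype
  have mid : ↥{x ∈ children G v a | c x = k} ≃ ↥{x ∈ children G v b | c x = k} :=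
    Classical.choice nonempty_equiv_of_countable
  exact (fiberEquiv c _ k).trans (mid.trans (fiberEquiv c _ k).symm)

lemma exists_pick {C : Type*} (htree : G.IsTree) (v w1 w2 : V) (c : V → C)
    (hcc : ∀ u k, ({w ∈ G.neighborSet u | c w = k}).Countable)
    (hci : ∀ u k, ({w ∈ G.neighborSet u | c w = k}).Infinite)
    (hw1 : w1 ∈ children G v v) (hw2 : w2 ∈ children G v v) (hcw : c w1 = c w2)
    (a b : V) : ∃ pq : (V → V) × (V → V),
    Set.MapsTo pq.1 (children G v a) (children G v b) ∧
    Set.MapsTo pq.2 (children G v b) (children G v a) ∧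
    (∀ x ∈ children G v a, pq.2 (pq.1 x) = x) ∧
    (∀ y ∈ children G v b, pq.1 (pq.2 y) = y) ∧
    (∀ x ∈ children G v a, c (pq.1 x) = c x) ∧
    (a = v → b = v → pq.1 w1 = w2) := by
  classical
  by_cases hab : a = v ∧ b = v
  · obtain ⟨rfl, rfl⟩ := hab
    refine ⟨(fun x => if x = w1 then w2 else if x = w2 then w1 else x,
             fun x => if x = w1 then w2 else if x = w2 then w1 else x), ?_, ?_, ?_, ?_, ?_, ?_⟩
    · intro x hx
      dsimp only
      split_ifs <;> simp_all
    · intro x hx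
      dsimp only
      split_ifs <;> simp_all
    · intro x hx
      dsimp only
      split_ifs <;> simp_all
    · intro x hx
      dsimp only
      split_ifs <;> simp_all
    · intro x hx
      dsimp only
      split_ifs <;> simp_all
    · intro _ _
      dsimp only
      simp
  · obtain ⟨e, he⟩ := exists_equiv htree v c hcc hci a b
    refine ⟨(fun x => if hx : x ∈ children G v a then ↑(e ⟨x, hx⟩) else x,
             fun y => if hy : y ∈ children G v b then ↑(e.symm ⟨y, hy⟩) else y),
      ?_, ?_, ?_, ?_, ?_, ?_⟩
    · intro x hx; simpa [hx] using (e ⟨x, hx⟩).2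
    · intro y hy; simpa [hy] using (e.symm ⟨y, hy⟩).2
    · intro x hx
      simp only [hx, dif_pos, (e ⟨x, hx⟩).2, Subtype.coe_eta]
      simp
    · intro y hy
      simp only [hy, dif_pos, (e.symm ⟨y, hy⟩).2, Subtype.coe_eta]
      simp
    · intro x hx
      simp only [hx, dif_pos]
      exact he ⟨x, hx⟩
    · intro h1 h2; exact absurd ⟨h1, h2⟩ hab


section Phi

variable {C : Type*}

noncomputable def pick (htree : G.IsTree) (v w1 w2 : V) (c : V → C)
    (hcc : ∀ u k, ({w ∈ G.neighborSet u | c w = k}).Countable)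
    (hci : ∀ u k, ({w ∈ G.neighborSet u | c w = k}).Infinite)
    (hw1 : w1 ∈ children G v v) (hw2 : w2 ∈ children G v v) (hcw : c w1 = c w2)
    (a b : V) : (V → V) × (V → V) :=
  (exists_pick htree v w1 w2 c hcc hci hw1 hw2 hcw a b).choose

variable (htree : G.IsTree) (v w1 w2 : V) (c : V → C)
    (hcc : ∀ u k, ({w ∈ G.neighborSet u | c w = k}).Countable)
    (hci : ∀ u k, ({w ∈ G.neighborSet u | c w = k}).Infinite)
    (hw1 : w1 ∈ children G v v) (hw2 : w2 ∈ children G v v) (hcw : c w1 = c w2)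

lemma pick_spec (a b : V) :
    Set.MapsTo (pick htree v w1 w2 c hcc hci hw1 hw2 hcw a b).1 (children G v a) (children G v b) ∧
    Set.MapsTo (pick htree v w1 w2 c hcc hci hw1 hw2 hcw a b).2 (children G v b) (children G v a) ∧
    (∀ x ∈ children G v a, (pick htree v w1 w2 c hcc hci hw1 hw2 hcw a b).2
      ((pick htree v w1 w2 c hcc hci hw1 hw2 hcw a b).1 x) = x) ∧
    (∀ y ∈ children G v b, (pick htree v w1 w2 c hcc hci hw1 hw2 hcw a b).1
      ((pick htree v w1 w2 c hcc hci hw1 hw2 hcw a b).2 y) = y) ∧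
    (∀ x ∈ children G v a, c ((pick htree v w1 w2 c hcc hci hw1 hw2 hcw a b).1 x) = c x) ∧
    (a = v → b = v → (pick htree v w1 w2 c hcc hci hw1 hw2 hcw a b).1 w1 = w2) :=
  (exists_pick htree v w1 w2 c hcc hci hw1 hw2 hcw a b).choose_spec

noncomputable def phi : V → V := fun u =>
  if h : u = v then v
  else (pick htree v w1 w2 c hcc hci hw1 hw2 hcw (parent htree v u)
    (phi (parent htree v u))).1 u
termination_by u => G.dist v u
decreasing_by
  have := (parent_spec htree (v := v) h).2
  omega

noncomputable def psi : V → V := fun u =>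
  if h : u = v then v
  else (pick htree v w1 w2 c hcc hci hw1 hw2 hcw (psi (parent htree v u))
    (parent htree v u)).2 u
termination_by u => G.dist v u
decreasing_by
  have := (parent_spec htree (v := v) h).2
  omega


lemma phi_root : phi htree v w1 w2 c hcc hci hw1 hw2 hcw v = v := by
  rw [phi]
  simp

lemma psi_root : psi htree v w1 w2 c hcc hci hw1 hw2 hcw v = v := by
  rw [psi]
  simp

lemma phi_ne {u : V} (h : u ≠ v) :
    phi htree v w1 w2 c hcc hci hw1 hw2 hcw u =
      (pick htree v w1 w2 c hcc hci hw1 hw2 hcw (parent htree v u)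
        (phi htree v w1 w2 c hcc hci hw1 hw2 hcw (parent htree v u))).1 u := by
  conv_lhs => rw [phi]
  simp [h]

lemma psi_ne {u : V} (h : u ≠ v) :
    psi htree v w1 w2 c hcc hci hw1 hw2 hcw u =
      (pick htree v w1 w2 c hcc hci hw1 hw2 hcw
        (psi htree v w1 w2 c hcc hci hw1 hw2 hcw (parent htree v u))
        (parent htree v u)).2 u := by
  conv_lhs => rw [psi]
  simp [h]

lemma phi_psi_main : ∀ n u, G.dist v u = n →
    (G.dist v (phi htree v w1 w2 c hcc hci hw1 hw2 hcw u) = G.dist v u ∧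
     c (phi htree v w1 w2 c hcc hci hw1 hw2 hcw u) = c u ∧
     psi htree v w1 w2 c hcc hci hw1 hw2 hcw (phi htree v w1 w2 c hcc hci hw1 hw2 hcw u) = u) ∧
    (G.dist v (psi htree v w1 w2 c hcc hci hw1 hw2 hcw u) = G.dist v u ∧
     c (psi htree v w1 w2 c hcc hci hw1 hw2 hcw u) = c u ∧
     phi htree v w1 w2 c hcc hci hw1 hw2 hcw (psi htree v w1 w2 c hcc hci hw1 hw2 hcw u) = u) := by
  set Φ := phi htree v w1 w2 c hcc hci hw1 hw2 hcw with hΦ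
  set Ψ := psi htree v w1 w2 c hcc hci hw1 hw2 hcw with hΨ
  set P := pick htree v w1 w2 c hcc hci hw1 hw2 hcw with hP
  intro n
  induction n using Nat.strong_induction_on with
  | _ n ih =>
    intro u hu
    rcases Nat.eq_zero_or_pos n with rfl | hpos
    · have huv : u = v := ((htree.isConnected.dist_eq_zero_iff).mp hu).symm
      subst huv
      have h1 := phi_root htree u w1 w2 c hcc hci hw1 hw2 hcw
      have h2 := psi_root htree u w1 w2 c hcc hci hw1 hw2 hcw
      refine ⟨⟨?_, ?_, ?_⟩, ?_, ?_, ?_⟩ <;> simp [hΦ, hΨ, h1, h2]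
    · have hu0 : u ≠ v := by
        rintro rfl
        rw [SimpleGraph.dist_self] at hu
        omega
      have hpar := parent_spec htree (v := v) hu0
      set a := parent htree v u with ha
      have hdista : G.dist v a = n - 1 := by omega
      have IH := ih (n - 1) (by omega) a hdista
      have hmem : u ∈ children G v a := mem_children_parent htree hu0
      have specA := pick_spec htree v w1 w2 c hcc hci hw1 hw2 hcw a (Φ a)
      have specB := pick_spec htree v w1 w2 c hcc hci hw1 hw2 hcw (Ψ a) a
      have hphiu : Φ u = (P a (Φ a)).1 u := phi_ne htree v w1 w2 c hcc hci hw1 hw2 hcw hu0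
      have hpsiu : Ψ u = (P (Ψ a) a).2 u := psi_ne htree v w1 w2 c hcc hci hw1 hw2 hcw hu0
      have hphim : Φ u ∈ children G v (Φ a) := hphiu ▸ specA.1 hmem
      have hpsim : Ψ u ∈ children G v (Ψ a) := hpsiu ▸ specB.2.1 hmem
      constructor
      · refine ⟨?_, ?_, ?_⟩
        · have := hphim.2
          rw [IH.1.1, hdista] at this
          omega
        · rw [hphiu]
          exact specA.2.2.2.2.1 u hmem
        · have hnv : Φ u ≠ v := ne_root_of_mem_children hphim
          rw [hΨ, psi_ne htree v w1 w2 c hcc hci hw1 hw2 hcw hnv, ← hΨ,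
            parent_of_mem_children htree hphim, IH.1.2.2, ← hP, hphiu]
          exact specA.2.2.1 u hmem
      · refine ⟨?_, ?_, ?_⟩
        · have := hpsim.2
          rw [IH.2.1, hdista] at this
          omega
        · have h1 : (P (Ψ a) a).1 ((P (Ψ a) a).2 u) = u := specB.2.2.2.1 u hmem
          have h2 : c ((P (Ψ a) a).1 ((P (Ψ a) a).2 u)) = c ((P (Ψ a) a).2 u) :=
            specB.2.2.2.2.1 _ (specB.2.1 hmem)
          rw [hpsiu]
          rw [h1] at h2
          exact h2.symm
        · have hnv : Ψ u ≠ v := ne_root_of_mem_children hpsim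
          rw [hΦ, phi_ne htree v w1 w2 c hcc hci hw1 hw2 hcw hnv, ← hΦ,
            parent_of_mem_children htree hpsim, IH.2.2.2, ← hP, hpsiu]
          exact specB.2.2.2.1 u hmem

lemma phi_children {u x : V} (hx : x ∈ children G v u) :
    phi htree v w1 w2 c hcc hci hw1 hw2 hcw x ∈
      children G v (phi htree v w1 w2 c hcc hci hw1 hw2 hcw u) := by
  have hnv : x ≠ v := ne_root_of_mem_children hx
  rw [phi_ne htree v w1 w2 c hcc hci hw1 hw2 hcw hnv, parent_of_mem_children htree hx]
  exact (pick_spec htree v w1 w2 c hcc hci hw1 hw2 hcw u _).1 hx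

lemma psi_children {u x : V} (hx : x ∈ children G v u) :
    psi htree v w1 w2 c hcc hci hw1 hw2 hcw x ∈
      children G v (psi htree v w1 w2 c hcc hci hw1 hw2 hcw u) := by
  have hnv : x ≠ v := ne_root_of_mem_children hx
  rw [psi_ne htree v w1 w2 c hcc hci hw1 hw2 hcw hnv, parent_of_mem_children htree hx]
  exact (pick_spec htree v w1 w2 c hcc hci hw1 hw2 hcw _ u).2.1 hx

lemma phi_adj {u x : V} (h : G.Adj u x) :
    G.Adj (phi htree v w1 w2 c hcc hci hw1 hw2 hcw u) (phi htree v w1 w2 c hcc hci hw1 hw2 hcw x) := by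
  rcases adj_dist htree v h with hd | hd
  · exact ((phi_children htree v w1 w2 c hcc hci hw1 hw2 hcw
      (⟨h.symm, by omega⟩ : u ∈ children G v x)).1).symm
  · exact (phi_children htree v w1 w2 c hcc hci hw1 hw2 hcw
      (⟨h, by omega⟩ : x ∈ children G v u)).1

lemma psi_adj {u x : V} (h : G.Adj u x) :
    G.Adj (psi htree v w1 w2 c hcc hci hw1 hw2 hcw u) (psi htree v w1 w2 c hcc hci hw1 hw2 hcw x) := by
  rcases adj_dist htree v h with hd | hd
  · exact ((psi_children htree v w1 w2 c hcc hci hw1 hw2 hcw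
      (⟨h.symm, by omega⟩ : u ∈ children G v x)).1).symm
  · exact (psi_children htree v w1 w2 c hcc hci hw1 hw2 hcw
      (⟨h, by omega⟩ : x ∈ children G v u)).1

lemma phi_w1 : phi htree v w1 w2 c hcc hci hw1 hw2 hcw w1 = w2 := by
  have hnv : w1 ≠ v := ne_root_of_mem_children hw1
  rw [phi_ne htree v w1 w2 c hcc hci hw1 hw2 hcw hnv, parent_of_mem_children htree hw1,
    phi_root]
  exact (pick_spec htree v w1 w2 c hcc hci hw1 hw2 hcw v v).2.2.2.2.2 rfl rfl

end Phi

theorem exists_nontrivial_auto [Nonempty V] (htree : G.IsTree) {C : Type*} (c : V → C)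
    (hcc : ∀ u k, ({w ∈ G.neighborSet u | c w = k}).Countable)
    (hci : ∀ u k, ({w ∈ G.neighborSet u | c w = k}).Infinite) :
    ∃ φ : G ≃g G, (∃ u, φ u ≠ u) ∧ ∀ u, c (φ u) = c u := by
  obtain ⟨v⟩ := (inferInstance : Nonempty V)
  obtain ⟨w1, hw1s, w2, hw2s, hne⟩ := (hci v (c v)).nontrivial
  have hw1 : w1 ∈ children G v v := ⟨hw1s.1, by
    rw [SimpleGraph.dist_self, dist_eq_one_iff_adj]; exact hw1s.1⟩
  have hw2 : w2 ∈ children G v v := ⟨hw2s.1, by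
    rw [SimpleGraph.dist_self, dist_eq_one_iff_adj]; exact hw2s.1⟩
  have hcw : c w1 = c w2 := by rw [hw1s.2, hw2s.2]
  have main := phi_psi_main htree v w1 w2 c hcc hci hw1 hw2 hcw
  refine ⟨⟨⟨phi htree v w1 w2 c hcc hci hw1 hw2 hcw, psi htree v w1 w2 c hcc hci hw1 hw2 hcw,
    fun u => (main _ u rfl).1.2.2, fun u => (main _ u rfl).2.2.2⟩, ?_⟩, ⟨w1, ?_⟩, ?_⟩
  · intro a b
    constructor
    · intro h
      simp only [Equiv.coe_fn_mk] at h
      have := psi_adj htree v w1 w2 c hcc hci hw1 hw2 hcw h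
      rwa [(main _ a rfl).1.2.2, (main _ b rfl).1.2.2] at this
    · intro h
      simp only [Equiv.coe_fn_mk]
      exact phi_adj htree v w1 w2 c hcc hci hw1 hw2 hcw h
  · simpa [phi_w1 htree v w1 w2 c hcc hci hw1 hw2 hcw] using hne.symm
  · exact fun u => (main _ u rfl).1.2.1

lemma countable_of_tree (htree : G.IsTree) (hdeg : ∀ u : V, (G.neighborSet u).Countable) :
    Countable V := by
  obtain ⟨v⟩ := htree.isConnected.nonempty
  have hS : ∀ n : ℕ, {u | G.dist v u ≤ n}.Countable := by
    intro n
    induction n with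
    | zero =>
      apply Set.Countable.mono (s₂ := {v}) _ (Set.countable_singleton v)
      intro u hu
      simp only [Set.mem_setOf_eq, Nat.le_zero] at hu
      simp [((htree.isConnected.dist_eq_zero_iff).mp hu).symm]
    | succ n ih =>
      apply Set.Countable.mono (s₂ := {u | G.dist v u ≤ n} ∪ ⋃ x ∈ {u | G.dist v u ≤ n}, G.neighborSet x)
      · intro u hu
        simp only [Set.mem_setOf_eq] at hu
        by_cases h : G.dist v u ≤ n
        · exact Or.inl h
        · have hne : u ≠ v := by
            rintro rfl
            rw [SimpleGraph.dist_self] at h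
            omega
          obtain ⟨hadj, hd⟩ := parent_spec htree (v := v) hne
          right
          refine Set.mem_biUnion (show G.dist v (parent htree v u) ≤ n by omega) hadj.symm
      · exact ih.union (ih.biUnion fun x _ => hdeg x)
  have huniv : (Set.univ : Set V).Countable := by
    have : (Set.univ : Set V) = ⋃ n : ℕ, {u | G.dist v u ≤ n} := by
      ext u
      simp only [Set.mem_univ, true_iff, Set.mem_iUnion, Set.mem_setOf_eq]
      exact ⟨G.dist v u, le_rfl⟩
    rw [this]
    exact Set.countable_iUnion hS
  exact Set.countable_univ_iff.mp huniv

open MeasureTheory in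
lemma cyl_null {C : Type*} [Fintype C] [Nonempty C] [MeasurableSpace C]
    (μ : Measure (V → C)) [IsProbabilityMeasure μ]
    (hμ : ∀ (F : Finset V) (f : V → C),
      μ {c : V → C | ∀ v ∈ F, c v = f v} = ((Fintype.card C : ENNReal))⁻¹ ^ F.card)
    (v : V) (k : C) (F : Finset V)
    (hcnt : (G.neighborSet v).Countable) (hinf : (G.neighborSet v : Set V).Infinite) :
    μ {c : V → C | ∀ w ∈ G.neighborSet v, w ∉ F → c w ≠ k} = 0 := by
  classical
  set S : Set V := G.neighborSet v \ ↑F with hS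
  have hScnt : S.Countable := Set.Countable.mono Set.diff_subset hcnt
  have hSinf : S.Infinite := hinf.diff F.finite_toSet
  haveI := hScnt.to_subtype
  haveI := hSinf.to_subtype
  obtain ⟨d⟩ := nonempty_denumerable ↥S
  set ws : ℕ → V := fun n => ↑(Denumerable.eqv ↥S |>.symm n) with hws
  have hws_inj : Function.Injective ws := fun a b h => by
    have := Subtype.coe_injective h
    exact (Denumerable.eqv ↥S).symm.injective this
  have hws_mem : ∀ n, ws n ∈ S := fun n => (Denumerable.eqv ↥S |>.symm n).2
  set A : Set (V → C) := {c | ∀ w ∈ G.neighborSet v, w ∉ F → c w ≠ k} with hA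
  set r : ENNReal := ((Fintype.card C - 1 : ℕ) : ENNReal) * ((Fintype.card C : ENNReal))⁻¹ with hr
  have key : ∀ m : ℕ, μ A ≤ r ^ m := by
    intro m
    set Gm : Finset (Fin m → C) := Finset.univ.filter (fun g => ∀ i, g i ≠ k) with hGm
    have hsub : A ⊆ ⋃ g ∈ Gm, {c : V → C | ∀ i : Fin m, c (ws i) = g i} := by
      intro c hc
      have hg : (fun i : Fin m => c (ws (i : ℕ))) ∈ Gm := by
        simp only [hGm, Finset.mem_filter, Finset.mem_univ, true_and]
        intro i
        exact hc (ws i) (hws_mem i).1 (hws_mem i).2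
      exact Set.mem_biUnion hg (fun i => rfl)
    have hcyl : ∀ g : Fin m → C,
        μ {c : V → C | ∀ i : Fin m, c (ws i) = g i} = ((Fintype.card C : ENNReal))⁻¹ ^ m := by
      intro g
      set Fm : Finset V := Finset.image (fun i : Fin m => ws i) Finset.univ with hFm
      set f : V → C := fun x => if h : ∃ i : Fin m, ws i = x then g h.choose else k with hf
      have hinj : Function.Injective (fun i : Fin m => ws (i : ℕ)) :=
        fun a b h => Fin.val_injective (hws_inj h)
      have hfy : ∀ i : Fin m, f (ws i) = g i := by
        intro i
        have hex : ∃ j : Fin m, ws (j : ℕ) = ws (i : ℕ) := ⟨i, rfl⟩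
        rw [hf]
        simp only [hex, dif_pos]
        congr 1
        exact hinj hex.choose_spec
      have hset : {c : V → C | ∀ x ∈ Fm, c x = f x} = {c : V → C | ∀ i : Fin m, c (ws i) = g i} := by
        ext c
        simp only [Set.mem_setOf_eq, hFm, Finset.mem_image, Finset.mem_univ, true_and]
        constructor
        · intro h i
          rw [← hfy i]
          exact h (ws i) ⟨i, rfl⟩
        · rintro h x ⟨i, rfl⟩
          rw [h i, hfy i]
      have hcard : Fm.card = m := by
        rw [hFm, Finset.card_image_of_injective _ hinj, Finset.card_univ, Fintype.card_fin]
      rw [← hset, hμ Fm f, hcard]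
    calc μ A ≤ μ (⋃ g ∈ Gm, {c : V → C | ∀ i : Fin m, c (ws i) = g i}) := measure_mono hsub
      _ ≤ ∑ g ∈ Gm, μ {c : V → C | ∀ i : Fin m, c (ws i) = g i} := measure_biUnion_finset_le _ _
      _ = Gm.card * ((Fintype.card C : ENNReal))⁻¹ ^ m := by
          rw [Finset.sum_congr rfl (fun g _ => hcyl g), Finset.sum_const, nsmul_eq_mul]
      _ ≤ ((Fintype.card C - 1 : ℕ) : ENNReal) ^ m * ((Fintype.card C : ENNReal))⁻¹ ^ m := by
          apply mul_le_mul_left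
          have hcard : Gm.card ≤ (Fintype.card C - 1) ^ m := by
            have h1 : Gm.card = Fintype.card {g : Fin m → C // ∀ i, g i ≠ k} :=
              (Fintype.card_subtype _).symm
            have h2 : Fintype.card {g : Fin m → C // ∀ i, g i ≠ k} =
                Fintype.card (∀ _ : Fin m, {x : C // x ≠ k}) :=
              Fintype.card_congr (Equiv.subtypePiEquivPi (p := fun _ b => b ≠ k))
            have h3 : Fintype.card (∀ _ : Fin m, {x : C // x ≠ k}) =
                (Fintype.card C - 1) ^ m := by
              rw [Fintype.card_pi]
              simp [Fintype.card_subtype_compl, Fintype.card_subtype_eq]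
            rw [h1, h2, h3]
          calc (Gm.card : ENNReal) ≤ ((Fintype.card C - 1) ^ m : ℕ) := by
                exact_mod_cast Nat.cast_le.mpr hcard
            _ = ((Fintype.card C - 1 : ℕ) : ENNReal) ^ m := by push_cast; ring
      _ = r ^ m := by rw [hr, mul_pow]
  have hr1 : r < 1 := by
    have hpos : (0 : ENNReal) < (Fintype.card C : ENNReal) := by
      simp [Fintype.card_pos]
    have hne0 : (Fintype.card C : ENNReal) ≠ 0 := hpos.ne'
    have hnetop : (Fintype.card C : ENNReal) ≠ ⊤ := ENNReal.natCast_ne_top _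
    have hlt : ((Fintype.card C - 1 : ℕ) : ENNReal) < (Fintype.card C : ENNReal) := by
      have : Fintype.card C - 1 < Fintype.card C := by
        have := Fintype.card_pos (α := C)
        omega
      exact_mod_cast this
    have hinv0 : ((Fintype.card C : ENNReal))⁻¹ ≠ 0 := by
      simp [hnetop]
    have hinvtop : ((Fintype.card C : ENNReal))⁻¹ ≠ ⊤ := by
      simp [hne0]
    calc r = ((Fintype.card C - 1 : ℕ) : ENNReal) * ((Fintype.card C : ENNReal))⁻¹ := rfl
      _ < (Fintype.card C : ENNReal) * ((Fintype.card C : ENNReal))⁻¹ :=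
          by rw [mul_comm _ ((Fintype.card C : ENNReal))⁻¹, mul_comm (Fintype.card C : ENNReal)]
             exact ENNReal.mul_lt_mul_right hinv0 hinvtop hlt
      _ = 1 := ENNReal.mul_inv_cancel hne0 hnetop
  have := ENNReal.tendsto_pow_atTop_nhds_zero_of_lt_one hr1
  have hle : μ A ≤ 0 := ge_of_tendsto' this key
  exact le_antisymm hle zero_le

end TreeAux

open MeasureTheory


/-- Let `G` be the regular tree `T_∞` in which every vertex has countably infinite
degree, and let `c` be a random colouring of its vertices with finitely many colours
(i.i.d. uniform, encoded by the cylinder condition on `μ`). Then almost surely there is a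
non-trivial automorphism of `G` preserving `c`. In fact, any colouring in which every
vertex has infinitely many neighbours of each colour admits a non-trivial
colour-preserving automorphism. -/
theorem tree_infinite_degree_not_distinguished {V : Type*} (G : SimpleGraph V)
    (htree : G.IsTree)
    (hdeg : ∀ v : V, Set.Countable (G.neighborSet v) ∧ Set.Infinite (G.neighborSet v))
    (C : Type*) [Fintype C] [Nonempty C] [MeasurableSpace C] [DiscreteMeasurableSpace C]
    (μ : Measure (V → C)) [IsProbabilityMeasure μ]
    (hμ : ∀ (F : Finset V) (f : V → C),
      μ {c : V → C | ∀ v ∈ F, c v = f v} = ((Fintype.card C : ENNReal))⁻¹ ^ F.card) :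
    μ {c : V → C | ¬ ∃ φ : G ≃g G, (∃ v, φ v ≠ v) ∧ ∀ v, c (φ v) = c v} = 0 ∧
    ∀ c : V → C, (∀ (v : V) (k : C), Set.Infinite {w ∈ G.neighborSet v | c w = k}) →
      ∃ φ : G ≃g G, (∃ v, φ v ≠ v) ∧ ∀ v, c (φ v) = c v := by
  haveI : Countable V := TreeAux.countable_of_tree htree (fun u => (hdeg u).1)
  haveI : Nonempty V := htree.isConnected.nonempty
  have part2 : ∀ c : V → C, (∀ (v : V) (k : C), Set.Infinite {w ∈ G.neighborSet v | c w = k}) →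
      ∃ φ : G ≃g G, (∃ v, φ v ≠ v) ∧ ∀ v, c (φ v) = c v := by
    intro c hinf
    exact TreeAux.exists_nontrivial_auto htree c
      (fun u k => Set.Countable.mono (fun x hx => hx.1) (hdeg u).1) hinf
  refine ⟨?_, part2⟩
  refine measure_mono_null (t := ⋃ v : V, ⋃ k : C, ⋃ F : Finset V,
    {c : V → C | ∀ w ∈ G.neighborSet v, w ∉ F → c w ≠ k}) ?_ ?_
  · intro c hc
    simp only [Set.mem_setOf_eq] at hc
    have hni : ¬ (∀ (v : V) (k : C), Set.Infinite {w ∈ G.neighborSet v | c w = k}) :=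
      fun h => hc (part2 c h)
    push_neg at hni
    obtain ⟨v, k, hfin⟩ := hni
    refine Set.mem_iUnion.mpr ⟨v, Set.mem_iUnion.mpr ⟨k, Set.mem_iUnion.mpr ⟨hfin.toFinset, ?_⟩⟩⟩
    intro w hw hnw hck
    exact hnw (hfin.mem_toFinset.mpr ⟨hw, hck⟩)
  · exact measure_iUnion_null fun v => measure_iUnion_null fun k => measure_iUnion_null fun F =>
      TreeAux.cyl_null μ hμ v k F (hdeg v).1 (hdeg v).2
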